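/- Let d ≥ 1, let 0 < ρ_min ≤ ρ_max and c₁ > 0, and let ρ: ℝ^d → ℝ be a continuously differentiable ℤ^d-periodic function with ρ_min ≤ ρ(x) ≤ ρ_max and |∇ρ(x)| ≤ c₁ for all x. Let f: ℝ^d → ℝ be a twice continuously differentiable ℤ^d-periodic function, and let λ ≥ 0 be such that −div(ρ(x)² ∇f(x)) = λ ρ(x) f(x) for every x ∈ ℝ^d, with the normalization ∫_{[0,1)^d} f(x)² ρ(x) dx = 1. Then there exists a constant C > 0, depending only on ρ_min and c₁, such that ∫_{[0,1)^d} |Δf(x)| dx ≤ C (λ + √λ). -/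

import Mathlib

open MeasureTheory Real

/-- The Laplacian of `f : ℝ^d → ℝ`, i.e. the sum of the pure second partial derivatives. -/
noncomputable def lap {d : ℕ} (f : EuclideanSpace ℝ (Fin d) → ℝ) (x : EuclideanSpace ℝ (Fin d)) : ℝ :=
  ∑ i, fderiv ℝ (fun y => fderiv ℝ f y (EuclideanSpace.single i 1)) x (EuclideanSpace.single i 1)

/-- The divergence of a vector field `F : ℝ^d → ℝ^d`. -/
noncomputable def divg {d : ℕ} (F : EuclideanSpace ℝ (Fin d) → EuclideanSpace ℝ (Fin d))
    (x : EuclideanSpace ℝ (Fin d)) : ℝ :=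
  ∑ i, fderiv ℝ F x (EuclideanSpace.single i 1) i

/-- The vector in `ℝ^d` with integer coordinates `k`. -/
noncomputable def intVec (d : ℕ) (k : Fin d → ℤ) : EuclideanSpace ℝ (Fin d) :=
  (EuclideanSpace.equiv (Fin d) ℝ).symm (fun i => (k i : ℝ))

/-- The fundamental domain `[0,1)^d` of the flat torus. -/
def torusCube (d : ℕ) : Set (EuclideanSpace ℝ (Fin d)) :=
  {x | ∀ i, x i ∈ Set.Ico (0 : ℝ) 1}

/-! ### Auxiliary lemmas -/

section Aux

variable {d : ℕ}

lemma stmt12_transfer (g : EuclideanSpace ℝ (Fin d) → ℝ) :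
    ∫ x in torusCube d, g x
      = ∫ x in Set.pi Set.univ (fun _ : Fin d => Set.Ico (0:ℝ) 1),
          g (((MeasurableEquiv.toLp 2 (Fin d → ℝ)).symm).symm x) := by
  have hset : ((MeasurableEquiv.toLp 2 (Fin d → ℝ)).symm).symm ⁻¹' torusCube d
      = Set.pi Set.univ (fun _ : Fin d => Set.Ico (0:ℝ) 1) := by
    ext x
    simp [MeasurableEquiv.coe_toLp, MeasurableEquiv.coe_toLp_symm, torusCube, Set.mem_pi]
  rw [← hset, MeasurePreserving.setIntegral_preimage_emb
    ((EuclideanSpace.volume_preserving_symm_measurableEquiv_toLp (Fin d)).symm)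
    ((MeasurableEquiv.toLp 2 (Fin d → ℝ)).symm).symm.measurableEmbedding]

lemma stmt12_cube_volume : volume (torusCube d) = 1 := by
  have hset : ((MeasurableEquiv.toLp 2 (Fin d → ℝ)).symm) ⁻¹'
      (Set.pi Set.univ (fun _ : Fin d => Set.Ico (0:ℝ) 1)) = torusCube d := by
    ext x
    simp [MeasurableEquiv.coe_toLp, MeasurableEquiv.coe_toLp_symm, torusCube, Set.mem_pi]
  rw [← hset, MeasurePreserving.measure_preimage
    (EuclideanSpace.volume_preserving_symm_measurableEquiv_toLp (Fin d))
    ((MeasurableSet.univ_pi (fun _ => measurableSet_Ico)).nullMeasurableSet)]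
  rw [volume_pi_pi]
  simp

lemma stmt12_integrableOn {g : EuclideanSpace ℝ (Fin d) → ℝ} (hg : Continuous g) :
    IntegrableOn g (torusCube d) := by
  set L := EuclideanSpace.equiv (Fin d) ℝ
  have hK : IsCompact (L.symm '' (Set.Icc (0 : Fin d → ℝ) 1)) :=
    (isCompact_Icc).image L.symm.continuous
  have hsub : torusCube d ⊆ L.symm '' (Set.Icc (0 : Fin d → ℝ) 1) := by
    intro x hx
    refine ⟨L x, ?_, L.symm_apply_apply x⟩
    constructor
    · intro i; exact (hx i).1
    · intro i; exact (hx i).2.le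
  exact (hg.continuousOn.integrableOn_compact hK).mono_set hsub

lemma stmt12_divg_continuous {F : EuclideanSpace ℝ (Fin d) → EuclideanSpace ℝ (Fin d)}
    (hF : ContDiff ℝ 1 F) : Continuous (divg F) := by
  have h1 : Continuous (fun x => fderiv ℝ F x) := hF.continuous_fderiv one_ne_zero
  exact continuous_finset_sum _ fun i _ =>
    (EuclideanSpace.proj (𝕜 := ℝ) i).continuous.comp <|
      (ContinuousLinearMap.apply ℝ _ (EuclideanSpace.single i (1:ℝ))).continuous.comp h1

lemma stmt12_fderiv_single {f : EuclideanSpace ℝ (Fin d) → ℝ} {x : EuclideanSpace ℝ (Fin d)}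
    (hf : DifferentiableAt ℝ f x) (i : Fin d) :
    fderiv ℝ f x (EuclideanSpace.single i 1) = gradient f x i := by
  rw [hf.hasGradientAt.hasFDerivAt.fderiv, InnerProductSpace.toDual_apply_apply,
    EuclideanSpace.inner_single_right]
  simp

lemma stmt12_gradient_contDiff {f : EuclideanSpace ℝ (Fin d) → ℝ} (hf : ContDiff ℝ 2 f) :
    ContDiff ℝ 1 (gradient f) := by
  have : gradient f = fun x => (InnerProductSpace.toDual ℝ _).symm (fderiv ℝ f x) := rfl
  rw [this]
  exact (LinearIsometryEquiv.contDiff _).comp (hf.fderiv_right (by norm_num))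

lemma stmt12_gradient_continuous {f : EuclideanSpace ℝ (Fin d) → ℝ} (hf : ContDiff ℝ 1 f) :
    Continuous (gradient f) := by
  have : gradient f = fun x => (InnerProductSpace.toDual ℝ _).symm (fderiv ℝ f x) := rfl
  rw [this]
  exact (LinearIsometryEquiv.continuous _).comp (hf.continuous_fderiv one_ne_zero)

lemma stmt12_gradient_periodic {f : EuclideanSpace ℝ (Fin d) → ℝ} (hfd : Differentiable ℝ f)
    (hper : ∀ x (k : Fin d → ℤ), f (x + intVec d k) = f x) (x : EuclideanSpace ℝ (Fin d))
    (k : Fin d → ℤ) : gradient f (x + intVec d k) = gradient f x := by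
  have h1 : (fun y => f (y + intVec d k)) = f := funext fun y => hper y k
  have h2 : HasFDerivAt (fun y => f (y + intVec d k)) (fderiv ℝ f (x + intVec d k)) x := by
    have := (hfd (x + intVec d k)).hasFDerivAt.comp x ((hasFDerivAt_id x).add_const (intVec d k))
    exact this
  rw [h1] at h2
  have h3 : fderiv ℝ f x = fderiv ℝ f (x + intVec d k) := h2.fderiv
  show (InnerProductSpace.toDual ℝ _).symm (fderiv ℝ f (x + intVec d k))
    = (InnerProductSpace.toDual ℝ _).symm (fderiv ℝ f x)
  rw [h3]

lemma stmt12_divg_smul (c : EuclideanSpace ℝ (Fin d) → ℝ)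
    (V : EuclideanSpace ℝ (Fin d) → EuclideanSpace ℝ (Fin d))
    (x : EuclideanSpace ℝ (Fin d)) (hc : DifferentiableAt ℝ c x) (hV : DifferentiableAt ℝ V x) :
    divg (fun y => c y • V y) x
      = (∑ i, fderiv ℝ c x (EuclideanSpace.single i 1) * V x i) + c x * divg V x := by
  have h := fderiv_fun_smul hc hV
  unfold divg
  rw [h, Finset.mul_sum, ← Finset.sum_add_distrib]
  congr 1
  funext i
  simp [smul_eq_mul]
  ring

lemma stmt12_fderiv_sq {ρ : EuclideanSpace ℝ (Fin d) → ℝ} {x : EuclideanSpace ℝ (Fin d)}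
    (hρ : DifferentiableAt ℝ ρ x) (v : EuclideanSpace ℝ (Fin d)) :
    fderiv ℝ (fun y => ρ y ^ 2) x v = 2 * ρ x * fderiv ℝ ρ x v := by
  have h2 : (fun y => ρ y ^ 2) = fun y => ρ y * ρ y := by funext y; ring
  rw [h2, fderiv_fun_mul hρ hρ]
  simp
  ring

lemma stmt12_lap_eq {f : EuclideanSpace ℝ (Fin d) → ℝ} (hf : ContDiff ℝ 2 f)
    (x : EuclideanSpace ℝ (Fin d)) : lap f x = divg (gradient f) x := by
  unfold lap divg
  congr 1
  funext i
  have hgrad_eq : (fun y => fderiv ℝ f y (EuclideanSpace.single i 1))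
      = fun y => (EuclideanSpace.proj i : EuclideanSpace ℝ (Fin d) →L[ℝ] ℝ) (gradient f y) := by
    funext y
    rw [stmt12_fderiv_single (hf.differentiable two_ne_zero y) i]
    simp
  rw [hgrad_eq]
  have hd : DifferentiableAt ℝ (gradient f) x := (stmt12_gradient_contDiff hf).differentiable one_ne_zero x
  have hcomp := ((EuclideanSpace.proj (𝕜 := ℝ) i).hasFDerivAt.comp x hd.hasFDerivAt)
  rw [show (fun y => (EuclideanSpace.proj (𝕜 := ℝ) i) (gradient f y))
    = (EuclideanSpace.proj (𝕜 := ℝ) i) ∘ gradient f from rfl, hcomp.fderiv]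
  rfl

/-- Integral of the divergence of a periodic `C¹` vector field over the fundamental domain
vanishes. -/
lemma stmt12_divg_integral_zero {n : ℕ}
    (F : EuclideanSpace ℝ (Fin (n+1)) → EuclideanSpace ℝ (Fin (n+1)))
    (hF : ContDiff ℝ 1 F)
    (hper : ∀ x (k : Fin (n+1) → ℤ), F (x + intVec (n+1) k) = F x) :
    ∫ x in torusCube (n+1), divg F x = 0 := by
  set L := EuclideanSpace.equiv (Fin (n+1)) ℝ with hL
  set G : (Fin (n+1) → ℝ) → (Fin (n+1) → ℝ) := fun x => L (F (L.symm x)) with hG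
  set G' : (Fin (n+1) → ℝ) → (Fin (n+1) → ℝ) →L[ℝ] (Fin (n+1) → ℝ) := fun x =>
    (L : EuclideanSpace ℝ (Fin (n+1)) →L[ℝ] (Fin (n+1) → ℝ)).comp
      ((fderiv ℝ F (L.symm x)).comp
        (L.symm : (Fin (n+1) → ℝ) →L[ℝ] EuclideanSpace ℝ (Fin (n+1)))) with hG'
  have hFd : Differentiable ℝ F := hF.differentiable one_ne_zero
  have hd : ∀ x : Fin (n+1) → ℝ, HasFDerivAt G (G' x) x := by
    intro x
    exact (L.toContinuousLinearMap.hasFDerivAt.comp _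
      ((hFd (L.symm x)).hasFDerivAt.comp x L.symm.toContinuousLinearMap.hasFDerivAt))
  have hdiv : ∀ x : Fin (n+1) → ℝ, (∑ i, G' x (Pi.single i 1) i) = divg F (L.symm x) := by
    intro x
    unfold divg
    congr 1
  have hcont : Continuous G := L.continuous.comp (hF.continuous.comp L.symm.continuous)
  have hint : IntegrableOn (fun x => ∑ i, G' x (Pi.single i 1) i)
      (Set.Icc (0:Fin (n+1) → ℝ) 1) := by
    apply Continuous.integrableOn_Icc
    have := (stmt12_divg_continuous hF).comp L.symm.continuous
    simp only [hdiv]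
    exact this
  have key := integral_divergence_of_hasFDerivAt_off_countable (a := (0 : Fin (n+1) → ℝ)) (b := 1)
    zero_le_one G G' ∅ Set.countable_empty hcont.continuousOn
    (fun x _ => hd x) hint
  have hbdry : ∀ i : Fin (n+1), (fun x : Fin n → ℝ => G (i.insertNth ((1:Fin (n+1) → ℝ) i) x) i)
      = (fun x : Fin n → ℝ => G (i.insertNth ((0:Fin (n+1) → ℝ) i) x) i) := by
    intro i
    funext x
    have h1 : (i.insertNth ((1:Fin (n+1) → ℝ) i) x)
        = (i.insertNth ((0:Fin (n+1) → ℝ) i) x) + (Pi.single i 1 : Fin (n+1) → ℝ) := by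
      refine Fin.insertNth_eq_iff.2 ⟨by simp, ?_⟩
      ext j
      simp only [Fin.removeNth, Pi.add_apply, Fin.insertNth_apply_succAbove, Pi.single_apply]
      rw [if_neg (Fin.succAbove_ne i j)]
      simp
    rw [h1]
    have h2 : L.symm ((i.insertNth ((0:Fin (n+1) → ℝ) i) x) + (Pi.single i 1 : Fin (n+1) → ℝ))
        = L.symm (i.insertNth ((0:Fin (n+1) → ℝ) i) x) + intVec (n+1) (Pi.single i 1) := by
      rw [map_add]
      congr 1
      unfold intVec
      congr 1
      ext j
      rcases eq_or_ne j i with rfl | h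
      · simp
      · simp [Pi.single_apply, h]
    show (L (F (L.symm _))) i = _
    rw [h2, hper]
  rw [funext hdiv] at key
  have hzero : (∫ x in Set.Icc (0:Fin (n+1) → ℝ) 1, divg F (L.symm x)) = 0 := by
    rw [key]
    apply Finset.sum_eq_zero
    intro i _
    rw [hbdry i, sub_self]
  rw [stmt12_transfer (divg F)]
  have heq : (∫ x in Set.pi Set.univ (fun _ : Fin (n+1) => Set.Ico (0:ℝ) 1),
      divg F (((MeasurableEquiv.toLp 2 (Fin (n+1) → ℝ)).symm).symm x))
      = ∫ x in Set.Icc (0:Fin (n+1) → ℝ) 1,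
      divg F (((MeasurableEquiv.toLp 2 (Fin (n+1) → ℝ)).symm).symm x) := by
    refine setIntegral_congr_set ?_
    have := MeasureTheory.Measure.univ_pi_Ico_ae_eq_Icc (α := fun _ : Fin (n+1) => ℝ)
      (μ := fun _ => volume) (f := fun _ => (0:ℝ)) (g := fun _ => 1)
    rw [volume_pi]
    exact this
  rw [heq]
  exact hzero

end Aux

set_option maxHeartbeats 1000000 in
/-- If `(λ, f)` is an eigenpair of the weighted Laplace–Beltrami operator
`Δ_ρ f = −(1/ρ) div(ρ² ∇f)` on the flat torus, i.e. `−div(ρ²∇f) = λρf` with the normalization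
`∫_{[0,1)^d} f² ρ = 1`, where `ρ` is `C¹`, `ℤ^d`-periodic, `ρ_min ≤ ρ ≤ ρ_max` and `|∇ρ| ≤ c₁`,
then `∫_{[0,1)^d} |Δf| ≤ C (λ + √λ)` with `C > 0` depending only on `ρ_min` and `c₁`. -/
theorem stmt12 (ρmin c₁ : ℝ) (h1 : 0 < ρmin) (h3 : 0 < c₁) :
    ∃ C : ℝ, 0 < C ∧
      ∀ (d : ℕ), 1 ≤ d →
      ∀ ρmax : ℝ, ρmin ≤ ρmax →
      ∀ ρ : EuclideanSpace ℝ (Fin d) → ℝ, ContDiff ℝ 1 ρ →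
      (∀ (x : EuclideanSpace ℝ (Fin d)) (k : Fin d → ℤ), ρ (x + intVec d k) = ρ x) →
      (∀ x, ρmin ≤ ρ x ∧ ρ x ≤ ρmax) →
      (∀ x, ‖gradient ρ x‖ ≤ c₁) →
      ∀ f : EuclideanSpace ℝ (Fin d) → ℝ, ContDiff ℝ 2 f →
      (∀ (x : EuclideanSpace ℝ (Fin d)) (k : Fin d → ℤ), f (x + intVec d k) = f x) →
      ∀ lam : ℝ, 0 ≤ lam →
      (∀ x, -divg (fun y => (ρ y) ^ 2 • gradient f y) x = lam * ρ x * f x) →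
      (∫ x in torusCube d, (f x) ^ 2 * ρ x) = 1 →
      (∫ x in torusCube d, |lap f x|) ≤ C * (lam + Real.sqrt lam) := by
  refine ⟨(1 + 1/ρmin)/(2*ρmin) + 2*c₁/ρmin^2 + 1, by positivity, ?_⟩
  intro d hd ρmax hρmax ρ hρ hρper hρbd hρgrad f hf hfper lam hlam heig hnorm
  obtain ⟨n, rfl⟩ : ∃ n, d = n + 1 := ⟨d - 1, (Nat.succ_pred_eq_of_pos hd).symm⟩
  set S := torusCube (n+1) with hS
  set g := gradient f with hg
  have hfC1 : ContDiff ℝ 1 f := hf.of_le one_le_two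
  have hgC1 : ContDiff ℝ 1 g := stmt12_gradient_contDiff hf
  have hgcont : Continuous g := stmt12_gradient_continuous hfC1
  have hfcont : Continuous f := hf.continuous
  have hρcont : Continuous ρ := hρ.continuous
  have hρgradcont : Continuous (gradient ρ) := stmt12_gradient_continuous hρ
  have hρpos : ∀ x, 0 < ρ x := fun x => lt_of_lt_of_le h1 (hρbd x).1
  -- volume of the cube is 1
  have hμ1 : volume S = 1 := stmt12_cube_volume
  have hμreal : (volume S).toReal = 1 := by rw [hμ1]; rfl
  have hfin : volume S < ⊤ := by rw [hμ1]; exact ENNReal.one_lt_top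
  -- pointwise divergence expansion
  have hdivexp : ∀ x, divg (fun y => (ρ y) ^ 2 • g y) x
      = 2 * ρ x * (inner ℝ (gradient ρ x) (g x)) + ρ x ^ 2 * divg g x := by
    intro x
    rw [stmt12_divg_smul (fun y => ρ y ^ 2) g x
      ((hρ.differentiable one_ne_zero x).pow 2) (hgC1.differentiable one_ne_zero x)]
    congr 1
    have : ∀ i : Fin (n+1), fderiv ℝ (fun y => ρ y ^ 2) x (EuclideanSpace.single i 1) * g x i
        = 2 * ρ x * (gradient ρ x i * g x i) := by
      intro i
      rw [stmt12_fderiv_sq (hρ.differentiable one_ne_zero x),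
        stmt12_fderiv_single (hρ.differentiable one_ne_zero x) i]
      ring
    rw [Finset.sum_congr rfl (fun i _ => this i), ← Finset.mul_sum]
    congr 1
    rw [PiLp.inner_apply]
    simp only [RCLike.inner_apply, conj_trivial, mul_comm]
  -- pointwise formula for lap f
  have hlap : ∀ x, lap f x = (-(lam * f x) - 2 * inner ℝ (gradient ρ x) (g x)) / ρ x := by
    intro x
    have hkey : 2 * ρ x * (inner ℝ (gradient ρ x) (g x)) + ρ x ^ 2 * lap f x
        = -(lam * ρ x * f x) := by
      rw [stmt12_lap_eq hf x, ← hdivexp x, ← heig x]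
      ring
    rw [eq_div_iff (hρpos x).ne']
    refine mul_left_cancel₀ (hρpos x).ne' ?_
    linear_combination hkey
  -- the big vector field and energy identity
  set Fbig : EuclideanSpace ℝ (Fin (n+1)) → EuclideanSpace ℝ (Fin (n+1)) :=
    fun y => f y • ((ρ y) ^ 2 • g y) with hFbig
  have hFbigC : ContDiff ℝ 1 Fbig := hfC1.smul ((hρ.pow 2).smul hgC1)
  have hFbigper : ∀ x (k : Fin (n+1) → ℤ), Fbig (x + intVec (n+1) k) = Fbig x := by
    intro x k
    have h := stmt12_gradient_periodic (hfC1.differentiable one_ne_zero) hfper x k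
    rw [← hg] at h
    simp only [hFbig, hfper x k, hρper x k, h]
  have hFbigdiv : ∀ x, divg Fbig x
      = ρ x ^ 2 * ‖g x‖ ^ 2 - lam * (f x ^ 2 * ρ x) := by
    intro x
    rw [stmt12_divg_smul f (fun y => (ρ y) ^ 2 • g y) x (hfC1.differentiable one_ne_zero x)
      (((hρ.differentiable one_ne_zero x).pow 2).smul (hgC1.differentiable one_ne_zero x))]
    have h2 : divg (fun y => (ρ y) ^ 2 • g y) x = -(lam * ρ x * f x) := by
      rw [← heig x]; ring
    rw [h2]
    have h3 : ∀ i : Fin (n+1), fderiv ℝ f x (EuclideanSpace.single i 1) * ((ρ x) ^ 2 • g x) i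
        = ρ x ^ 2 * (g x i * g x i) := by
      intro i
      rw [stmt12_fderiv_single (hfC1.differentiable one_ne_zero x) i]
      simp [smul_eq_mul]
      ring
    rw [Finset.sum_congr rfl (fun i _ => h3 i), ← Finset.mul_sum]
    have h4 : (∑ i, g x i * g x i) = ‖g x‖ ^ 2 := by
      rw [← real_inner_self_eq_norm_sq, PiLp.inner_apply]
      norm_num [sq]
    rw [h4]
    ring
  -- integrability facts
  have hint_f2ρ : IntegrableOn (fun x => f x ^ 2 * ρ x) S :=
    stmt12_integrableOn ((hfcont.pow 2).mul hρcont)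
  have hint_f2 : IntegrableOn (fun x => f x ^ 2) S := stmt12_integrableOn (hfcont.pow 2)
  have hint_absf : IntegrableOn (fun x => |f x|) S := stmt12_integrableOn hfcont.abs
  have hint_g : IntegrableOn (fun x => ‖g x‖) S := stmt12_integrableOn hgcont.norm
  have hint_g2 : IntegrableOn (fun x => ‖g x‖ ^ 2) S :=
    stmt12_integrableOn (by exact (hgcont.norm).pow 2)
  have hint_ρ2g2 : IntegrableOn (fun x => ρ x ^ 2 * ‖g x‖ ^ 2) S :=
    stmt12_integrableOn (by exact (hρcont.pow 2).mul ((hgcont.norm).pow 2))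
  have hlapcont : Continuous (fun x => |lap f x|) := by
    rw [funext hlap]
    apply Continuous.abs
    exact ((continuous_const.mul hfcont).neg.sub
      (continuous_const.mul (hρgradcont.inner hgcont))).div hρcont (fun x => (hρpos x).ne')
  have hint_lap : IntegrableOn (fun x => |lap f x|) S := stmt12_integrableOn hlapcont
  -- energy identity
  have hEnergy : (∫ x in S, ρ x ^ 2 * ‖g x‖ ^ 2) = lam := by
    have hzero := stmt12_divg_integral_zero Fbig hFbigC hFbigper
    simp only [hFbigdiv] at hzero
    rw [integral_sub hint_ρ2g2 (hint_f2ρ.const_mul lam), integral_const_mul, hnorm,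
      mul_one, sub_eq_zero] at hzero
    exact hzero
  -- L² bound on gradient
  have hE2 : (∫ x in S, ‖g x‖ ^ 2) ≤ lam / ρmin ^ 2 := by
    rw [le_div_iff₀ (by positivity)]
    rw [← hEnergy]
    have : (∫ x in S, ‖g x‖ ^ 2) * ρmin ^ 2 = ∫ x in S, ρmin ^ 2 * ‖g x‖ ^ 2 := by
      rw [integral_const_mul]; ring
    rw [this]
    refine integral_mono (hint_g2.const_mul _) hint_ρ2g2 ?_
    intro x
    have := pow_le_pow_left₀ h1.le (hρbd x).1 2
    exact mul_le_mul_of_nonneg_right this (sq_nonneg _)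
  -- L¹ bound on gradient
  have hB : (∫ x in S, ‖g x‖) ≤ Real.sqrt lam / ρmin := by
    rcases eq_or_lt_of_le hlam with hlam0 | hlam0
    · -- lam = 0
      have hzero2 : (∫ x in S, ρ x ^ 2 * ‖g x‖ ^ 2) = 0 := by rw [hEnergy, ← hlam0]
      have hae : (fun x => ρ x ^ 2 * ‖g x‖ ^ 2) =ᵐ[volume.restrict S] 0 := by
        refine (integral_eq_zero_iff_of_nonneg ?_ hint_ρ2g2).1 hzero2
        intro x
        positivity
      have hae2 : (fun x => ‖g x‖) =ᵐ[volume.restrict S] 0 := by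
        filter_upwards [hae] with x hx
        have hρx : ρ x ^ 2 ≠ 0 := pow_ne_zero 2 (hρpos x).ne'
        have : ‖g x‖ ^ 2 = 0 := by
          rcases mul_eq_zero.1 hx with h | h
          · exact absurd h hρx
          · exact h
        simpa using pow_eq_zero_iff (n := 2) (by norm_num) |>.1 this
      rw [integral_congr_ae hae2]
      simp [← hlam0]
    · -- lam > 0
      set ε := Real.sqrt lam / ρmin with hε
      have hεpos : 0 < ε := by positivity
      have hpt : ∀ x, ‖g x‖ ≤ ε / 2 + (1 / (2 * ε)) * ‖g x‖ ^ 2 := by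
        intro x
        have hid : ε / 2 + (1 / (2 * ε)) * ‖g x‖ ^ 2 - ‖g x‖
            = (1 / (2 * ε)) * (‖g x‖ - ε) ^ 2 := by
          field_simp
          ring
        nlinarith [mul_nonneg (by positivity : (0:ℝ) ≤ 1 / (2 * ε)) (sq_nonneg (‖g x‖ - ε))]
      have hstep : (∫ x in S, ‖g x‖) ≤ ∫ x in S, (ε / 2 + (1 / (2 * ε)) * ‖g x‖ ^ 2) := by
        refine integral_mono hint_g ?_ hpt
        exact (integrableOn_const hfin.ne).add (hint_g2.const_mul _)
      rw [integral_add (integrableOn_const (C := ε / 2) hfin.ne) (hint_g2.const_mul _),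
        setIntegral_const, integral_const_mul, measureReal_def, hμreal] at hstep
      have hsq : Real.sqrt lam * Real.sqrt lam = lam := Real.mul_self_sqrt hlam
      have hfinal : ε / 2 + (1 / (2 * ε)) * (lam / ρmin ^ 2) = Real.sqrt lam / ρmin := by
        rw [hε]
        have hsl : (0:ℝ) < Real.sqrt lam := Real.sqrt_pos.2 hlam0
        field_simp
        nlinarith [hsq, sq_nonneg (Real.sqrt lam), sq_nonneg ρmin, mul_pos hsl (mul_pos h1 (mul_pos h1 h1))]
      calc (∫ x in S, ‖g x‖) ≤ 1 • (ε / 2) + (1 / (2 * ε)) * ∫ x in S, ‖g x‖ ^ 2 := hstep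
        _ ≤ ε / 2 + (1 / (2 * ε)) * (lam / ρmin ^ 2) := by
            rw [one_smul]
            have : (1 / (2 * ε)) * (∫ x in S, ‖g x‖ ^ 2) ≤ (1 / (2 * ε)) * (lam / ρmin ^ 2) :=
              mul_le_mul_of_nonneg_left hE2 (by positivity)
            linarith
        _ = Real.sqrt lam / ρmin := hfinal
  -- L¹ bound on f
  have hf2 : (∫ x in S, f x ^ 2) ≤ 1 / ρmin := by
    rw [le_div_iff₀ h1]
    rw [← hnorm]
    have : (∫ x in S, f x ^ 2) * ρmin = ∫ x in S, f x ^ 2 * ρmin := by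
      rw [← integral_mul_const]
    rw [this]
    refine integral_mono (hint_f2.mul_const _) hint_f2ρ ?_
    intro x
    exact mul_le_mul_of_nonneg_left (hρbd x).1 (sq_nonneg _)
  have hA : (∫ x in S, |f x|) ≤ (1 + 1 / ρmin) / 2 := by
    have hpt : ∀ x, |f x| ≤ 1 / 2 + (1 / 2) * f x ^ 2 := by
      intro x
      have h := sq_nonneg (|f x| - 1)
      have h2 : |f x| ^ 2 = f x ^ 2 := sq_abs _
      nlinarith
    have hstep : (∫ x in S, |f x|) ≤ ∫ x in S, (1 / 2 + (1 / 2) * f x ^ 2) := by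
      refine integral_mono hint_absf ?_ hpt
      exact (integrableOn_const hfin.ne).add (hint_f2.const_mul _)
    rw [integral_add (integrableOn_const (C := (1 / 2 : ℝ)) hfin.ne) (hint_f2.const_mul _),
      setIntegral_const, integral_const_mul, measureReal_def, hμreal, one_smul] at hstep
    calc (∫ x in S, |f x|) ≤ 1 / 2 + (1 / 2) * ∫ x in S, f x ^ 2 := hstep
      _ ≤ 1 / 2 + (1 / 2) * (1 / ρmin) := by
          have := mul_le_mul_of_nonneg_left hf2 (by norm_num : (0:ℝ) ≤ 1 / 2)
          linarith
      _ = (1 + 1 / ρmin) / 2 := by ring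
  -- pointwise bound on |lap f|
  have hptlap : ∀ x, |lap f x| ≤ (lam / ρmin) * |f x| + (2 * c₁ / ρmin) * ‖g x‖ := by
    intro x
    rw [hlap x, abs_div, abs_of_pos (hρpos x)]
    have hnum : |(-(lam * f x) - 2 * inner ℝ (gradient ρ x) (g x))|
        ≤ lam * |f x| + 2 * c₁ * ‖g x‖ := by
      calc |(-(lam * f x) - 2 * inner ℝ (gradient ρ x) (g x))|
          ≤ |(-(lam * f x))| + |2 * inner ℝ (gradient ρ x) (g x)| := abs_sub _ _
        _ = lam * |f x| + 2 * |inner ℝ (gradient ρ x) (g x)| := by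
            rw [abs_neg, abs_mul, abs_mul, abs_of_nonneg hlam]
            norm_num
        _ ≤ lam * |f x| + 2 * (c₁ * ‖g x‖) := by
            have h5 : |(inner ℝ (gradient ρ x) (g x) : ℝ)| ≤ ‖gradient ρ x‖ * ‖g x‖ :=
              abs_real_inner_le_norm _ _
            have h6 : ‖gradient ρ x‖ * ‖g x‖ ≤ c₁ * ‖g x‖ :=
              mul_le_mul_of_nonneg_right (hρgrad x) (norm_nonneg _)
            nlinarith
        _ = lam * |f x| + 2 * c₁ * ‖g x‖ := by ring
    have hdd : |(-(lam * f x) - 2 * inner ℝ (gradient ρ x) (g x))| / ρ x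
        ≤ (lam * |f x| + 2 * c₁ * ‖g x‖) / ρmin := by
      apply div_le_div₀ (by positivity) hnum h1 (hρbd x).1
    calc |(-(lam * f x) - 2 * inner ℝ (gradient ρ x) (g x))| / ρ x
        ≤ (lam * |f x| + 2 * c₁ * ‖g x‖) / ρmin := hdd
      _ = (lam / ρmin) * |f x| + (2 * c₁ / ρmin) * ‖g x‖ := by ring
  -- assemble
  have hmain : (∫ x in S, |lap f x|)
      ≤ (lam / ρmin) * ((1 + 1 / ρmin) / 2) + (2 * c₁ / ρmin) * (Real.sqrt lam / ρmin) := by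
    have hstep : (∫ x in S, |lap f x|)
        ≤ ∫ x in S, ((lam / ρmin) * |f x| + (2 * c₁ / ρmin) * ‖g x‖) := by
      refine integral_mono hint_lap ?_ hptlap
      exact (hint_absf.const_mul _).add (hint_g.const_mul _)
    rw [integral_add (hint_absf.const_mul _) (hint_g.const_mul _),
      integral_const_mul, integral_const_mul] at hstep
    have h7 : (lam / ρmin) * (∫ x in S, |f x|) ≤ (lam / ρmin) * ((1 + 1 / ρmin) / 2) :=
      mul_le_mul_of_nonneg_left hA (by positivity)
    have h8 : (2 * c₁ / ρmin) * (∫ x in S, ‖g x‖) ≤ (2 * c₁ / ρmin) * (Real.sqrt lam / ρmin) :=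
      mul_le_mul_of_nonneg_left hB (by positivity)
    linarith
  refine le_trans hmain ?_
  have hsqrtnn : 0 ≤ Real.sqrt lam := Real.sqrt_nonneg lam
  have ha : 0 < (1 + 1/ρmin)/(2*ρmin) := by positivity
  have hb : 0 < 2*c₁/ρmin^2 := by positivity
  have e1 : (lam / ρmin) * ((1 + 1 / ρmin) / 2) = ((1 + 1/ρmin)/(2*ρmin)) * lam := by
    ring
  have e2 : (2 * c₁ / ρmin) * (Real.sqrt lam / ρmin) = (2*c₁/ρmin^2) * Real.sqrt lam := by
    ring
  rw [e1, e2]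
  nlinarith [mul_nonneg ha.le hsqrtnn, mul_nonneg hb.le hlam, mul_nonneg hlam hsqrtnn]
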